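/- Let τ ∈ ℝ, let a, b, c, d, f, k be differentiable functions of τ, set D = diag(1, √2, 2), A₀ = [[0,0,0],[1,0,0],[−(√2/3)τ,1,0]], A_{−1} = [[b, c+(√2/3)τ, −1],[a, −b−f+1/3, −c+(√2/3)τ],[d, k, f+2/3]], B₁ = [[0,0,0],[0,0,0],[−1,0,0]], B₀ = [[−c,1,0],[f−(√2/3)τc,0,1],[(√2/3)τ(b+f)−(a+k), b+(√2/3)τc, c]], and define A(ξ,τ) = D(2^(−3/2)A₀ + ξ^{−1}A_{−1})D^{−1}, B(ξ,τ) = D((1/2)ξB₁ + √2 B₀)D^{−1}. Then the zero-curvature equation dA/dτ − dB/dξ + AB − BA = 0 (as an identity in ξ ≠ 0) holds if and only if the six differential equations hold: c'/√2 = −c² − b − f; b'/√2 = −cf − k + (√2/3)τ(b+c²) + (2/9)τ²c; f'/√2 = −bc + a − (√2/3)τ(f+c²) + (2/9)τ²c; a'/√2 = 2bf + f² − ck + d − f/3 − (√2/3)τ(bc − a − k − c/3) − (2/9)τ²(b+f); k'/√2 = −b² − 2bf − ac − d − b/3 − (√2/3)τ(cf + a + k + c/3) + (2/9)τ²(b+f);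 d'/√2 = 2cd − bk + af + (2/3)a + (2/3)k − (√2/3)τ(f² − b² − ac − ck + (2/3)b + (2/3)f). -/

import Mathlib

/-- `√2` as a complex number. -/
noncomputable def s2C : ℂ := (Real.sqrt 2 : ℝ)

/-- D = diag(1, √2, 2). -/
noncomputable def matD : Matrix (Fin 3) (Fin 3) ℂ := Matrix.diagonal ![1, s2C, 2]

/-- The matrix A₀ of the Lax pair. -/
noncomputable def matA0 (τ : ℝ) : Matrix (Fin 3) (Fin 3) ℂ :=
  !![0, 0, 0; 1, 0, 0; -(s2C / 3) * (τ : ℂ), 1, 0]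

/-- The matrix A₋₁ of the Lax pair. -/
noncomputable def matAm1 (a b c d f k : ℝ → ℂ) (τ : ℝ) : Matrix (Fin 3) (Fin 3) ℂ :=
  !![b τ, c τ + (s2C / 3) * (τ : ℂ), -1;
     a τ, -(b τ) - f τ + 1 / 3, -(c τ) + (s2C / 3) * (τ : ℂ);
     d τ, k τ, f τ + 2 / 3]

/-- The matrix B₁ of the Lax pair. -/
noncomputable def matB1 : Matrix (Fin 3) (Fin 3) ℂ := !![0, 0, 0; 0, 0, 0; -1, 0, 0]

/-- The matrix B₀ of the Lax pair. -/
noncomputable def matB0 (a b c f k : ℝ → ℂ) (τ : ℝ) : Matrix (Fin 3) (Fin 3) ℂ :=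
  !![-(c τ), 1, 0;
     f τ - (s2C / 3) * (τ : ℂ) * c τ, 0, 1;
     (s2C / 3) * (τ : ℂ) * (b τ + f τ) - (a τ + k τ), b τ + (s2C / 3) * (τ : ℂ) * c τ, c τ]

/-- A(ξ,τ) = D(2^(−3/2)A₀ + ξ⁻¹A₋₁)D⁻¹. -/
noncomputable def laxA (a b c d f k : ℝ → ℂ) (ξ : ℂ) (τ : ℝ) : Matrix (Fin 3) (Fin 3) ℂ :=
  matD * ((((2 : ℝ) ^ (-(3 : ℝ) / 2) : ℝ) : ℂ) • matA0 τ + ξ⁻¹ • matAm1 a b c d f k τ) * matD⁻¹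

/-- B(ξ,τ) = D((1/2)ξB₁ + √2·B₀)D⁻¹. -/
noncomputable def laxB (a b c f k : ℝ → ℂ) (ξ : ℂ) (τ : ℝ) : Matrix (Fin 3) (Fin 3) ℂ :=
  matD * (((1 / 2 : ℂ) * ξ) • matB1 + s2C • matB0 a b c f k τ) * matD⁻¹

lemma hs2 : s2C ^ 2 = 2 := by
  rw [s2C, ← Complex.ofReal_pow]
  norm_num [Real.sq_sqrt]

lemma hs2ne : s2C ≠ 0 := by
  unfold s2C
  simp only [ne_eq, Complex.ofReal_eq_zero]
  positivity

lemma hsinv : s2C * s2C⁻¹ = 1 := mul_inv_cancel₀ hs2ne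

lemma matD_inv : matD⁻¹ = Matrix.diagonal ![1, s2C / 2, (1 : ℂ) / 2] := by
  apply Matrix.inv_eq_right_inv
  rw [matD, Matrix.diagonal_mul_diagonal]
  ext i j
  fin_cases i <;> fin_cases j <;>
    simp [Matrix.diagonal_apply, Matrix.one_apply] <;>
    linear_combination (1/2 : ℂ) * hs2

lemma h2pow : (((2 : ℝ) ^ (-(3 : ℝ) / 2) : ℝ) : ℂ) = s2C / 4 := by
  have h : (2 : ℝ) ^ (-(3 : ℝ) / 2) = Real.sqrt 2 / 4 := by
    have hs : Real.sqrt 2 = (2 : ℝ) ^ ((1 : ℝ) / 2) := Real.sqrt_eq_rpow 2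
    have h32 : (2 : ℝ) ^ ((3 : ℝ) / 2) = 2 * Real.sqrt 2 := by
      rw [show (3 : ℝ) / 2 = 1 + 1 / 2 by norm_num, Real.rpow_add (by norm_num),
        Real.rpow_one, hs]
    have hpos : (0 : ℝ) < Real.sqrt 2 := Real.sqrt_pos.mpr (by norm_num)
    have h2 : Real.sqrt 2 * Real.sqrt 2 = 2 := Real.mul_self_sqrt (by norm_num)
    rw [show -(3 : ℝ) / 2 = -((3 : ℝ) / 2) by norm_num, Real.rpow_neg (by norm_num), h32]
    field_simp
    nlinarith [h2]
  rw [h]; unfold s2C; push_cast; ring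

lemma laxA_apply (a b c d f k : ℝ → ℂ) (ξ : ℂ) (τ : ℝ) :
    laxA a b c d f k ξ τ =
    !![((1 : ℂ)*ξ⁻¹*(b τ)), ((1/2 : ℂ)*s2C*ξ⁻¹*(c τ) + (1/6 : ℂ)*s2C^2*(τ:ℂ)*ξ⁻¹), ((-1/2 : ℂ)*ξ⁻¹);
     ((1 : ℂ)*s2C*ξ⁻¹*(a τ) + (1/4 : ℂ)*s2C^2), ((1/6 : ℂ)*s2C^2*ξ⁻¹ + (-1/2 : ℂ)*s2C^2*ξ⁻¹*(f τ) + (-1/2 : ℂ)*s2C^2*ξ⁻¹*(b τ)), ((-1/2 : ℂ)*s2C*ξ⁻¹*(c τ) + (1/6 : ℂ)*s2C^2*(τ:ℂ)*ξ⁻¹);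
     ((2 : ℂ)*ξ⁻¹*(d τ) + (-1/6 : ℂ)*s2C^2*(τ:ℂ)), ((1 : ℂ)*s2C*ξ⁻¹*(k τ) + (1/4 : ℂ)*s2C^2), ((2/3 : ℂ)*ξ⁻¹ + (1 : ℂ)*ξ⁻¹*(f τ))] := by
  rw [laxA, matD_inv, h2pow]
  ext i j
  fin_cases i <;> fin_cases j <;>
    simp [Matrix.mul_apply, Fin.sum_univ_three, matD, matA0, matAm1, Matrix.diagonal_apply] <;>
    ring

lemma laxB_apply (a b c f k : ℝ → ℂ) (ξ : ℂ) (τ : ℝ) :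
    laxB a b c f k ξ τ =
    !![((-1 : ℂ)*s2C*(c τ)), ((1/2 : ℂ)*s2C^2), (0 : ℂ);
     ((1 : ℂ)*s2C^2*(f τ) + (-1/3 : ℂ)*s2C^3*(τ:ℂ)*(c τ)), (0 : ℂ), ((1/2 : ℂ)*s2C^2);
     ((-1 : ℂ)*ξ + (-2 : ℂ)*s2C*(k τ) + (-2 : ℂ)*s2C*(a τ) + (2/3 : ℂ)*s2C^2*(τ:ℂ)*(f τ) + (2/3 : ℂ)*s2C^2*(τ:ℂ)*(b τ)), ((1 : ℂ)*s2C^2*(b τ) + (1/3 : ℂ)*s2C^3*(τ:ℂ)*(c τ)), ((1 : ℂ)*s2C*(c τ))] := by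
  rw [laxB, matD_inv]
  ext i j
  fin_cases i <;> fin_cases j <;>
    simp [Matrix.mul_apply, Fin.sum_univ_three, matD, matB1, matB0, Matrix.diagonal_apply] <;>
    ring

lemma deriv_lin (a b c d f k : ℝ → ℂ)
    (ha : Differentiable ℝ a) (hb : Differentiable ℝ b) (hc : Differentiable ℝ c)
    (hd : Differentiable ℝ d) (hf : Differentiable ℝ f) (hk : Differentiable ℝ k)
    (p q ra rb rc rd rf rk : ℂ) (τ : ℝ) :
    deriv (fun t : ℝ => p + q * (t : ℂ) + ra * a t + rb * b t + rc * c t + rd * d t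
        + rf * f t + rk * k t) τ
      = q + ra * deriv a τ + rb * deriv b τ + rc * deriv c τ + rd * deriv d τ
        + rf * deriv f τ + rk * deriv k τ := by
  have hof : HasDerivAt (fun t : ℝ => (t : ℂ)) 1 τ := by
    simpa using (hasDerivAt_id τ).ofReal_comp
  simpa [Pi.add_def] using ((((((((hof.const_mul q).const_add p).add ((ha τ).hasDerivAt.const_mul ra)).add
    ((hb τ).hasDerivAt.const_mul rb)).add ((hc τ).hasDerivAt.const_mul rc)).add
    ((hd τ).hasDerivAt.const_mul rd)).add ((hf τ).hasDerivAt.const_mul rf)).add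
    ((hk τ).hasDerivAt.const_mul rk)).deriv

lemma deriv_aff (u v ξ : ℂ) : deriv (fun z : ℂ => u + v * z) ξ = v := by
  have : HasDerivAt (fun z : ℂ => u + v * z) v ξ := by
    simpa using ((hasDerivAt_id ξ).const_mul v).const_add u
  exact this.deriv

lemma dA00 (a b c d f k : ℝ → ℂ)
    (ha : Differentiable ℝ a) (hb : Differentiable ℝ b) (hc : Differentiable ℝ c)
    (hd : Differentiable ℝ d) (hf : Differentiable ℝ f) (hk : Differentiable ℝ k)
    (ξ : ℂ) (τ : ℝ) :
    deriv (fun t : ℝ => laxA a b c d f k ξ t 0 0) τ = ((1 : ℂ)*ξ⁻¹*(deriv b τ)) := by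
  have h : (fun t : ℝ => laxA a b c d f k ξ t 0 0)
      = fun t : ℝ => (0 : ℂ) + (0 : ℂ) * (t : ℂ) + (0 : ℂ) * a t + ((1 : ℂ)*ξ⁻¹) * b t
        + (0 : ℂ) * c t + (0 : ℂ) * d t + (0 : ℂ) * f t + (0 : ℂ) * k t := by
    funext t
    simp [laxA_apply]
    try ring
  rw [h, deriv_lin a b c d f k ha hb hc hd hf hk]
  ring

lemma dA01 (a b c d f k : ℝ → ℂ)
    (ha : Differentiable ℝ a) (hb : Differentiable ℝ b) (hc : Differentiable ℝ c)
    (hd : Differentiable ℝ d) (hf : Differentiable ℝ f) (hk : Differentiable ℝ k)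
    (ξ : ℂ) (τ : ℝ) :
    deriv (fun t : ℝ => laxA a b c d f k ξ t 0 1) τ = ((1/2 : ℂ)*s2C*ξ⁻¹*(deriv c τ) + (1/6 : ℂ)*s2C^2*ξ⁻¹) := by
  have h : (fun t : ℝ => laxA a b c d f k ξ t 0 1)
      = fun t : ℝ => (0 : ℂ) + ((1/6 : ℂ)*s2C^2*ξ⁻¹) * (t : ℂ) + (0 : ℂ) * a t + (0 : ℂ) * b t
        + ((1/2 : ℂ)*s2C*ξ⁻¹) * c t + (0 : ℂ) * d t + (0 : ℂ) * f t + (0 : ℂ) * k t := by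
    funext t
    simp [laxA_apply]
    try ring
  rw [h, deriv_lin a b c d f k ha hb hc hd hf hk]
  ring

lemma dA02 (a b c d f k : ℝ → ℂ)
    (ha : Differentiable ℝ a) (hb : Differentiable ℝ b) (hc : Differentiable ℝ c)
    (hd : Differentiable ℝ d) (hf : Differentiable ℝ f) (hk : Differentiable ℝ k)
    (ξ : ℂ) (τ : ℝ) :
    deriv (fun t : ℝ => laxA a b c d f k ξ t 0 2) τ = (0 : ℂ) := by
  have h : (fun t : ℝ => laxA a b c d f k ξ t 0 2)
      = fun t : ℝ => ((-1/2 : ℂ)*ξ⁻¹) + (0 : ℂ) * (t : ℂ) + (0 : ℂ) * a t + (0 : ℂ) * b t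
        + (0 : ℂ) * c t + (0 : ℂ) * d t + (0 : ℂ) * f t + (0 : ℂ) * k t := by
    funext t
    simp [laxA_apply]
    try ring
  rw [h, deriv_lin a b c d f k ha hb hc hd hf hk]
  ring

lemma dA10 (a b c d f k : ℝ → ℂ)
    (ha : Differentiable ℝ a) (hb : Differentiable ℝ b) (hc : Differentiable ℝ c)
    (hd : Differentiable ℝ d) (hf : Differentiable ℝ f) (hk : Differentiable ℝ k)
    (ξ : ℂ) (τ : ℝ) :
    deriv (fun t : ℝ => laxA a b c d f k ξ t 1 0) τ = ((1 : ℂ)*s2C*ξ⁻¹*(deriv a τ)) := by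
  have h : (fun t : ℝ => laxA a b c d f k ξ t 1 0)
      = fun t : ℝ => ((1/4 : ℂ)*s2C^2) + (0 : ℂ) * (t : ℂ) + ((1 : ℂ)*s2C*ξ⁻¹) * a t + (0 : ℂ) * b t
        + (0 : ℂ) * c t + (0 : ℂ) * d t + (0 : ℂ) * f t + (0 : ℂ) * k t := by
    funext t
    simp [laxA_apply]
    try ring
  rw [h, deriv_lin a b c d f k ha hb hc hd hf hk]
  ring

lemma dA11 (a b c d f k : ℝ → ℂ)
    (ha : Differentiable ℝ a) (hb : Differentiable ℝ b) (hc : Differentiable ℝ c)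
    (hd : Differentiable ℝ d) (hf : Differentiable ℝ f) (hk : Differentiable ℝ k)
    (ξ : ℂ) (τ : ℝ) :
    deriv (fun t : ℝ => laxA a b c d f k ξ t 1 1) τ = ((-1/2 : ℂ)*s2C^2*ξ⁻¹*(deriv f τ) + (-1/2 : ℂ)*s2C^2*ξ⁻¹*(deriv b τ)) := by
  have h : (fun t : ℝ => laxA a b c d f k ξ t 1 1)
      = fun t : ℝ => ((1/6 : ℂ)*s2C^2*ξ⁻¹) + (0 : ℂ) * (t : ℂ) + (0 : ℂ) * a t + ((-1/2 : ℂ)*s2C^2*ξ⁻¹) * b t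
        + (0 : ℂ) * c t + (0 : ℂ) * d t + ((-1/2 : ℂ)*s2C^2*ξ⁻¹) * f t + (0 : ℂ) * k t := by
    funext t
    simp [laxA_apply]
    try ring
  rw [h, deriv_lin a b c d f k ha hb hc hd hf hk]
  ring

lemma dA12 (a b c d f k : ℝ → ℂ)
    (ha : Differentiable ℝ a) (hb : Differentiable ℝ b) (hc : Differentiable ℝ c)
    (hd : Differentiable ℝ d) (hf : Differentiable ℝ f) (hk : Differentiable ℝ k)
    (ξ : ℂ) (τ : ℝ) :
    deriv (fun t : ℝ => laxA a b c d f k ξ t 1 2) τ = ((-1/2 : ℂ)*s2C*ξ⁻¹*(deriv c τ) + (1/6 : ℂ)*s2C^2*ξ⁻¹) := by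
  have h : (fun t : ℝ => laxA a b c d f k ξ t 1 2)
      = fun t : ℝ => (0 : ℂ) + ((1/6 : ℂ)*s2C^2*ξ⁻¹) * (t : ℂ) + (0 : ℂ) * a t + (0 : ℂ) * b t
        + ((-1/2 : ℂ)*s2C*ξ⁻¹) * c t + (0 : ℂ) * d t + (0 : ℂ) * f t + (0 : ℂ) * k t := by
    funext t
    simp [laxA_apply]
    try ring
  rw [h, deriv_lin a b c d f k ha hb hc hd hf hk]
  ring

lemma dA20 (a b c d f k : ℝ → ℂ)
    (ha : Differentiable ℝ a) (hb : Differentiable ℝ b) (hc : Differentiable ℝ c)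
    (hd : Differentiable ℝ d) (hf : Differentiable ℝ f) (hk : Differentiable ℝ k)
    (ξ : ℂ) (τ : ℝ) :
    deriv (fun t : ℝ => laxA a b c d f k ξ t 2 0) τ = ((2 : ℂ)*ξ⁻¹*(deriv d τ) + (-1/6 : ℂ)*s2C^2) := by
  have h : (fun t : ℝ => laxA a b c d f k ξ t 2 0)
      = fun t : ℝ => (0 : ℂ) + ((-1/6 : ℂ)*s2C^2) * (t : ℂ) + (0 : ℂ) * a t + (0 : ℂ) * b t
        + (0 : ℂ) * c t + ((2 : ℂ)*ξ⁻¹) * d t + (0 : ℂ) * f t + (0 : ℂ) * k t := by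
    funext t
    simp [laxA_apply]
    try ring
  rw [h, deriv_lin a b c d f k ha hb hc hd hf hk]
  ring

lemma dA21 (a b c d f k : ℝ → ℂ)
    (ha : Differentiable ℝ a) (hb : Differentiable ℝ b) (hc : Differentiable ℝ c)
    (hd : Differentiable ℝ d) (hf : Differentiable ℝ f) (hk : Differentiable ℝ k)
    (ξ : ℂ) (τ : ℝ) :
    deriv (fun t : ℝ => laxA a b c d f k ξ t 2 1) τ = ((1 : ℂ)*s2C*ξ⁻¹*(deriv k τ)) := by
  have h : (fun t : ℝ => laxA a b c d f k ξ t 2 1)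
      = fun t : ℝ => ((1/4 : ℂ)*s2C^2) + (0 : ℂ) * (t : ℂ) + (0 : ℂ) * a t + (0 : ℂ) * b t
        + (0 : ℂ) * c t + (0 : ℂ) * d t + (0 : ℂ) * f t + ((1 : ℂ)*s2C*ξ⁻¹) * k t := by
    funext t
    simp [laxA_apply]
    try ring
  rw [h, deriv_lin a b c d f k ha hb hc hd hf hk]
  ring

lemma dA22 (a b c d f k : ℝ → ℂ)
    (ha : Differentiable ℝ a) (hb : Differentiable ℝ b) (hc : Differentiable ℝ c)
    (hd : Differentiable ℝ d) (hf : Differentiable ℝ f) (hk : Differentiable ℝ k)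
    (ξ : ℂ) (τ : ℝ) :
    deriv (fun t : ℝ => laxA a b c d f k ξ t 2 2) τ = ((1 : ℂ)*ξ⁻¹*(deriv f τ)) := by
  have h : (fun t : ℝ => laxA a b c d f k ξ t 2 2)
      = fun t : ℝ => ((2/3 : ℂ)*ξ⁻¹) + (0 : ℂ) * (t : ℂ) + (0 : ℂ) * a t + (0 : ℂ) * b t
        + (0 : ℂ) * c t + (0 : ℂ) * d t + ((1 : ℂ)*ξ⁻¹) * f t + (0 : ℂ) * k t := by
    funext t
    simp [laxA_apply]
    try ring
  rw [h, deriv_lin a b c d f k ha hb hc hd hf hk]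
  ring

lemma dB00 (a b c f k : ℝ → ℂ) (ξ : ℂ) (τ : ℝ) :
    deriv (fun z : ℂ => laxB a b c f k z τ 0 0) ξ = (0 : ℂ) := by
  have h : (fun z : ℂ => laxB a b c f k z τ 0 0)
      = fun z : ℂ => ((-1 : ℂ)*s2C*(c τ)) + (0 : ℂ) * z := by
    funext z
    simp [laxB_apply]
    try ring
  rw [h, deriv_aff]

lemma dB01 (a b c f k : ℝ → ℂ) (ξ : ℂ) (τ : ℝ) :
    deriv (fun z : ℂ => laxB a b c f k z τ 0 1) ξ = (0 : ℂ) := by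
  have h : (fun z : ℂ => laxB a b c f k z τ 0 1)
      = fun z : ℂ => ((1/2 : ℂ)*s2C^2) + (0 : ℂ) * z := by
    funext z
    simp [laxB_apply]
    try ring
  rw [h, deriv_aff]

lemma dB02 (a b c f k : ℝ → ℂ) (ξ : ℂ) (τ : ℝ) :
    deriv (fun z : ℂ => laxB a b c f k z τ 0 2) ξ = (0 : ℂ) := by
  have h : (fun z : ℂ => laxB a b c f k z τ 0 2)
      = fun z : ℂ => (0 : ℂ) + (0 : ℂ) * z := by
    funext z
    simp [laxB_apply]
    try ring
  rw [h, deriv_aff]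

lemma dB10 (a b c f k : ℝ → ℂ) (ξ : ℂ) (τ : ℝ) :
    deriv (fun z : ℂ => laxB a b c f k z τ 1 0) ξ = (0 : ℂ) := by
  have h : (fun z : ℂ => laxB a b c f k z τ 1 0)
      = fun z : ℂ => ((1 : ℂ)*s2C^2*(f τ) + (-1/3 : ℂ)*s2C^3*(τ:ℂ)*(c τ)) + (0 : ℂ) * z := by
    funext z
    simp [laxB_apply]
    try ring
  rw [h, deriv_aff]

lemma dB11 (a b c f k : ℝ → ℂ) (ξ : ℂ) (τ : ℝ) :
    deriv (fun z : ℂ => laxB a b c f k z τ 1 1) ξ = (0 : ℂ) := by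
  have h : (fun z : ℂ => laxB a b c f k z τ 1 1)
      = fun z : ℂ => (0 : ℂ) + (0 : ℂ) * z := by
    funext z
    simp [laxB_apply]
    try ring
  rw [h, deriv_aff]

lemma dB12 (a b c f k : ℝ → ℂ) (ξ : ℂ) (τ : ℝ) :
    deriv (fun z : ℂ => laxB a b c f k z τ 1 2) ξ = (0 : ℂ) := by
  have h : (fun z : ℂ => laxB a b c f k z τ 1 2)
      = fun z : ℂ => ((1/2 : ℂ)*s2C^2) + (0 : ℂ) * z := by
    funext z
    simp [laxB_apply]
    try ring
  rw [h, deriv_aff]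

lemma dB20 (a b c f k : ℝ → ℂ) (ξ : ℂ) (τ : ℝ) :
    deriv (fun z : ℂ => laxB a b c f k z τ 2 0) ξ = ((-1 : ℂ)) := by
  have h : (fun z : ℂ => laxB a b c f k z τ 2 0)
      = fun z : ℂ => ((-2 : ℂ)*s2C*(k τ) + (-2 : ℂ)*s2C*(a τ) + (2/3 : ℂ)*s2C^2*(τ:ℂ)*(f τ) + (2/3 : ℂ)*s2C^2*(τ:ℂ)*(b τ)) + ((-1 : ℂ)) * z := by
    funext z
    simp [laxB_apply]
    try ring
  rw [h, deriv_aff]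

lemma dB21 (a b c f k : ℝ → ℂ) (ξ : ℂ) (τ : ℝ) :
    deriv (fun z : ℂ => laxB a b c f k z τ 2 1) ξ = (0 : ℂ) := by
  have h : (fun z : ℂ => laxB a b c f k z τ 2 1)
      = fun z : ℂ => ((1 : ℂ)*s2C^2*(b τ) + (1/3 : ℂ)*s2C^3*(τ:ℂ)*(c τ)) + (0 : ℂ) * z := by
    funext z
    simp [laxB_apply]
    try ring
  rw [h, deriv_aff]

lemma dB22 (a b c f k : ℝ → ℂ) (ξ : ℂ) (τ : ℝ) :
    deriv (fun z : ℂ => laxB a b c f k z τ 2 2) ξ = (0 : ℂ) := by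
  have h : (fun z : ℂ => laxB a b c f k z τ 2 2)
      = fun z : ℂ => ((1 : ℂ)*s2C*(c τ)) + (0 : ℂ) * z := by
    funext z
    simp [laxB_apply]
    try ring
  rw [h, deriv_aff]

set_option maxHeartbeats 3200000 in
theorem stmt13 (a b c d f k : ℝ → ℂ)
    (ha : Differentiable ℝ a) (hb : Differentiable ℝ b) (hc : Differentiable ℝ c)
    (hd : Differentiable ℝ d) (hf : Differentiable ℝ f) (hk : Differentiable ℝ k) :
    (∀ ξ : ℂ, ξ ≠ 0 → ∀ τ : ℝ, ∀ i j : Fin 3,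
        deriv (fun t : ℝ => laxA a b c d f k ξ t i j) τ
            - deriv (fun z : ℂ => laxB a b c f k z τ i j) ξ
            + (laxA a b c d f k ξ τ * laxB a b c f k ξ τ
              - laxB a b c f k ξ τ * laxA a b c d f k ξ τ) i j = 0) ↔
      (∀ τ : ℝ,
        deriv c τ / s2C = -(c τ) ^ 2 - b τ - f τ ∧
        deriv b τ / s2C = -(c τ) * f τ - k τ + (s2C / 3) * (τ : ℂ) * (b τ + (c τ) ^ 2)
            + (2 / 9) * (τ : ℂ) ^ 2 * c τ ∧
        deriv f τ / s2C = -(b τ) * c τ + a τ - (s2C / 3) * (τ : ℂ) * (f τ + (c τ) ^ 2)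
            + (2 / 9) * (τ : ℂ) ^ 2 * c τ ∧
        deriv a τ / s2C = 2 * b τ * f τ + (f τ) ^ 2 - c τ * k τ + d τ - f τ / 3
            - (s2C / 3) * (τ : ℂ) * (b τ * c τ - a τ - k τ - c τ / 3)
            - (2 / 9) * (τ : ℂ) ^ 2 * (b τ + f τ) ∧
        deriv k τ / s2C = -(b τ) ^ 2 - 2 * b τ * f τ - a τ * c τ - d τ - b τ / 3
            - (s2C / 3) * (τ : ℂ) * (c τ * f τ + a τ + k τ + c τ / 3)
            + (2 / 9) * (τ : ℂ) ^ 2 * (b τ + f τ) ∧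
        deriv d τ / s2C = 2 * c τ * d τ - b τ * k τ + a τ * f τ + (2 / 3) * a τ + (2 / 3) * k τ
            - (s2C / 3) * (τ : ℂ)
              * ((f τ) ^ 2 - (b τ) ^ 2 - a τ * c τ - c τ * k τ + (2 / 3) * b τ + (2 / 3) * f τ)) := by
  constructor
  · intro H τ
    have H00 := H 1 one_ne_zero τ 0 0
    rw [dA00 a b c d f k ha hb hc hd hf hk, dB00] at H00
    simp only [laxA_apply, laxB_apply, Matrix.sub_apply, Matrix.mul_apply,
      Fin.sum_univ_three] at H00
    simp at H00
    have H01 := H 1 one_ne_zero τ 0 1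
    rw [dA01 a b c d f k ha hb hc hd hf hk, dB01] at H01
    simp only [laxA_apply, laxB_apply, Matrix.sub_apply, Matrix.mul_apply,
      Fin.sum_univ_three] at H01
    simp at H01
    have H10 := H 1 one_ne_zero τ 1 0
    rw [dA10 a b c d f k ha hb hc hd hf hk, dB10] at H10
    simp only [laxA_apply, laxB_apply, Matrix.sub_apply, Matrix.mul_apply,
      Fin.sum_univ_three] at H10
    simp at H10
    have H20 := H 1 one_ne_zero τ 2 0
    rw [dA20 a b c d f k ha hb hc hd hf hk, dB20] at H20
    simp only [laxA_apply, laxB_apply, Matrix.sub_apply, Matrix.mul_apply,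
      Fin.sum_univ_three] at H20
    simp at H20
    have H21 := H 1 one_ne_zero τ 2 1
    rw [dA21 a b c d f k ha hb hc hd hf hk, dB21] at H21
    simp only [laxA_apply, laxB_apply, Matrix.sub_apply, Matrix.mul_apply,
      Fin.sum_univ_three] at H21
    simp at H21
    have H22 := H 1 one_ne_zero τ 2 2
    rw [dA22 a b c d f k ha hb hc hd hf hk, dB22] at H22
    simp only [laxA_apply, laxB_apply, Matrix.sub_apply, Matrix.mul_apply,
      Fin.sum_univ_three] at H22
    simp at H22
    refine ⟨?_, ?_, ?_, ?_, ?_, ?_⟩ <;> rw [div_eq_iff hs2ne]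
    · linear_combination ((1 : ℂ)*s2C) * H01 + ((-1/2 : ℂ)*(deriv c τ) + (-1/2 : ℂ)*s2C*(f τ) + (-1/2 : ℂ)*s2C*(c τ)^2 + (-1/2 : ℂ)*s2C*(b τ) + (1/12 : ℂ)*s2C^3 + (-1/4 : ℂ)*s2C^3*(f τ) + (-1/4 : ℂ)*s2C^3*(b τ)) * hs2
    · linear_combination ((1 : ℂ)) * H00 + ((1/4 : ℂ) + (-1/2 : ℂ)*s2C*(c τ)*(f τ) + (1/2 : ℂ)*s2C*(a τ) + (1/9 : ℂ)*s2C*(τ:ℂ)^2*(c τ) + (1/8 : ℂ)*s2C^2 + (-1/6 : ℂ)*s2C^2*(τ:ℂ)*(f τ) + (1/6 : ℂ)*s2C^2*(τ:ℂ)*(c τ)^2 + (1/18 : ℂ)*s2C^3*(τ:ℂ)^2*(c τ)) * hs2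
    · linear_combination ((1 : ℂ)) * H22 + ((-1/4 : ℂ) + (-1/2 : ℂ)*s2C*(k τ) + (-1/2 : ℂ)*s2C*(b τ)*(c τ) + (1/9 : ℂ)*s2C*(τ:ℂ)^2*(c τ) + (-1/8 : ℂ)*s2C^2 + (-1/6 : ℂ)*s2C^2*(τ:ℂ)*(c τ)^2 + (1/6 : ℂ)*s2C^2*(τ:ℂ)*(b τ) + (1/18 : ℂ)*s2C^3*(τ:ℂ)^2*(c τ)) * hs2
    · linear_combination ((1/2 : ℂ)*s2C) * H10 + ((-1/2 : ℂ)*(deriv a τ) + (-1/6 : ℂ)*s2C*(f τ) + (1/2 : ℂ)*s2C*(f τ)^2 + (1/2 : ℂ)*s2C*(d τ) + (-1/2 : ℂ)*s2C*(c τ)*(k τ) + (1 : ℂ)*s2C*(b τ)*(f τ) + (-1/9 : ℂ)*s2C*(τ:ℂ)^2*(f τ) + (-1/9 : ℂ)*s2C*(τ:ℂ)^2*(b τ) + (1/8 : ℂ)*s2C^2*(c τ) + (1/6 : ℂ)*s2C^2*(τ:ℂ)*(k τ) + (1/18 : ℂ)*s2C^2*(τ:ℂ)*(c τ) + (-1/6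 : ℂ)*s2C^2*(τ:ℂ)*(b τ)*(c τ) + (1/6 : ℂ)*s2C^2*(τ:ℂ)*(a τ) + (-1/12 : ℂ)*s2C^3*(f τ) + (1/4 : ℂ)*s2C^3*(f τ)^2 + (1/4 : ℂ)*s2C^3*(b τ)*(f τ) + (-1/24 : ℂ)*s2C^3*(τ:ℂ) + (-1/18 : ℂ)*s2C^3*(τ:ℂ)^2*(f τ) + (-1/18 : ℂ)*s2C^3*(τ:ℂ)^2*(b τ) + (1/36 : ℂ)*s2C^4*(τ:ℂ)*(c τ) + (-1/12 : ℂ)*s2C^4*(τ:ℂ)*(c τ)*(f τ) + (-1/12 : ℂ)*s2C^4*(τ:ℂ)*(b τ)*(c τ)) * hs2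
    · linear_combination ((1/2 : ℂ)*s2C) * H21 + ((-1/2 : ℂ)*(deriv k τ) + (-1/2 : ℂ)*s2C*(d τ) + (-1/6 : ℂ)*s2C*(b τ) + (-1 : ℂ)*s2C*(b τ)*(f τ) + (-1/2 : ℂ)*s2C*(b τ)^2 + (-1/2 : ℂ)*s2C*(a τ)*(c τ) + (1/9 : ℂ)*s2C*(τ:ℂ)^2*(f τ) + (1/9 : ℂ)*s2C*(τ:ℂ)^2*(b τ) + (1/8 : ℂ)*s2C^2*(c τ) + (-1/6 : ℂ)*s2C^2*(τ:ℂ)*(k τ) + (-1/18 : ℂ)*s2C^2*(τ:ℂ)*(c τ) + (-1/6 : ℂ)*s2C^2*(τ:ℂ)*(c τ)*(f τ) + (-1/6 : ℂ)*s2C^2*(τ:ℂ)*(a τ) + (1/12 : ℂ)*s2C^3*(b τ) + (-1/4 : ℂ)*s2C^3*(b τ)*(f τ) + (-1/4 : ℂ)*s2C^3*(b τ)^2 + (1/24 : ℂ)*s2C^3*(τ:ℂ) + (1/18 : ℂ)*s2C^3*(τ:ℂ)^2*(f τ) + (1/18 : ℂ)*s2C^3*(τ:ℂ)^2*(b τ)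 + (1/36 : ℂ)*s2C^4*(τ:ℂ)*(c τ) + (-1/12 : ℂ)*s2C^4*(τ:ℂ)*(c τ)*(f τ) + (-1/12 : ℂ)*s2C^4*(τ:ℂ)*(b τ)*(c τ)) * hs2
    · linear_combination ((1/2 : ℂ)) * H20 + ((1/12 : ℂ) + (-1/4 : ℂ)*(f τ) + (1/4 : ℂ)*(b τ) + (-1/2 : ℂ)*s2C*(f τ)*(k τ) + (1/2 : ℂ)*s2C*(a τ)*(b τ) + (-1/8 : ℂ)*s2C^2*(f τ) + (1/8 : ℂ)*s2C^2*(b τ) + (1/6 : ℂ)*s2C^2*(τ:ℂ)*(c τ)*(k τ) + (1/6 : ℂ)*s2C^2*(τ:ℂ)*(a τ)*(c τ) + (1/12 : ℂ)*s2C^3*(τ:ℂ)*(c τ)) * hs2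
  · intro H ξ hξ τ i j
    have hinv : ξ * ξ⁻¹ = 1 := mul_inv_cancel₀ hξ
    obtain ⟨h1, h2, h3, h4, h5, h6⟩ := H τ
    rw [div_eq_iff hs2ne] at h1 h2 h3 h4 h5 h6
    have hc' : deriv c τ = s2C * (-(c τ) ^ 2 - b τ - f τ) := by linear_combination h1
    have hb' : deriv b τ = s2C * (-(c τ) * f τ - k τ + (s2C / 3) * (τ : ℂ) * (b τ + (c τ) ^ 2)
        + (2 / 9) * (τ : ℂ) ^ 2 * c τ) := by linear_combination h2
    have hf' : deriv f τ = s2C * (-(b τ) * c τ + a τ - (s2C / 3) * (τ : ℂ) * (f τ + (c τ) ^ 2)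
        + (2 / 9) * (τ : ℂ) ^ 2 * c τ) := by linear_combination h3
    have ha' : deriv a τ = s2C * (2 * b τ * f τ + (f τ) ^ 2 - c τ * k τ + d τ - f τ / 3
        - (s2C / 3) * (τ : ℂ) * (b τ * c τ - a τ - k τ - c τ / 3)
        - (2 / 9) * (τ : ℂ) ^ 2 * (b τ + f τ)) := by linear_combination h4
    have hk' : deriv k τ = s2C * (-(b τ) ^ 2 - 2 * b τ * f τ - a τ * c τ - d τ - b τ / 3
        - (s2C / 3) * (τ : ℂ) * (c τ * f τ + a τ + k τ + c τ / 3)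
        + (2 / 9) * (τ : ℂ) ^ 2 * (b τ + f τ)) := by linear_combination h5
    have hd' : deriv d τ = s2C * (2 * c τ * d τ - b τ * k τ + a τ * f τ + (2 / 3) * a τ
        + (2 / 3) * k τ - (s2C / 3) * (τ : ℂ)
          * ((f τ) ^ 2 - (b τ) ^ 2 - a τ * c τ - c τ * k τ + (2 / 3) * b τ + (2 / 3) * f τ)) := by
      linear_combination h6
    fin_cases i <;> fin_cases j <;>
      simp only [Fin.zero_eta, Fin.mk_one, Fin.reduceFinMk, Fin.isValue]
    · rw [dA00 a b c d f k ha hb hc hd hf hk, dB00]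
      simp only [laxA_apply, laxB_apply, Matrix.sub_apply, Matrix.mul_apply,
        Fin.sum_univ_three]
      simp only [Matrix.cons_val', Matrix.cons_val_zero, Matrix.cons_val_one, Matrix.head_cons,
        Matrix.empty_val', Matrix.cons_val_fin_one, Matrix.of_apply, Matrix.cons_val_two,
        Matrix.tail_cons, Matrix.vecHead, Matrix.vecTail, Matrix.cons_val_succ,
        Function.comp_apply, Fin.succ_zero_eq_one, Fin.succ_one_eq_two, Fin.isValue]
      linear_combination ((1 : ℂ)*ξ⁻¹) * hb' + ((-1/4 : ℂ) + (1/2 : ℂ)*s2C*ξ⁻¹*(c τ)*(f τ) + (-1/2 : ℂ)*s2C*ξ⁻¹*(a τ) + (-1/9 : ℂ)*s2C*(τ:ℂ)^2*ξ⁻¹*(c τ) + (-1/8 : ℂ)*s2C^2 + (1/6 : ℂ)*s2C^2*(τ:ℂ)*ξ⁻¹*(f τ) + (-1/6 : ℂ)*s2C^2*(τ:ℂ)*ξ⁻¹*(c τ)^2 + (-1/18 : ℂ)*s2C^3*(τ:ℂ)^2*ξ⁻¹*(c τ)) * hs2 + ((1/2 : ℂ)) * hinv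
    · rw [dA01 a b c d f k ha hb hc hd hf hk, dB01]
      simp only [laxA_apply, laxB_apply, Matrix.sub_apply, Matrix.mul_apply,
        Fin.sum_univ_three]
      simp only [Matrix.cons_val', Matrix.cons_val_zero, Matrix.cons_val_one, Matrix.head_cons,
        Matrix.empty_val', Matrix.cons_val_fin_one, Matrix.of_apply, Matrix.cons_val_two,
        Matrix.tail_cons, Matrix.vecHead, Matrix.vecTail, Matrix.cons_val_succ,
        Function.comp_apply, Fin.succ_zero_eq_one, Fin.succ_one_eq_two, Fin.isValue]
      linear_combination ((1/2 : ℂ)*s2C*ξ⁻¹) * hc' + ((-1/12 : ℂ)*s2C^2*ξ⁻¹ + (1/4 : ℂ)*s2C^2*ξ⁻¹*(f τ) + (1/4 : ℂ)*s2C^2*ξ⁻¹*(b τ)) * hs2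
    · rw [dA02 a b c d f k ha hb hc hd hf hk, dB02]
      simp only [laxA_apply, laxB_apply, Matrix.sub_apply, Matrix.mul_apply,
        Fin.sum_univ_three]
      simp only [Matrix.cons_val', Matrix.cons_val_zero, Matrix.cons_val_one, Matrix.head_cons,
        Matrix.empty_val', Matrix.cons_val_fin_one, Matrix.of_apply, Matrix.cons_val_two,
        Matrix.tail_cons, Matrix.vecHead, Matrix.vecTail, Matrix.cons_val_succ,
        Function.comp_apply, Fin.succ_zero_eq_one, Fin.succ_one_eq_two, Fin.isValue]
      linear_combination ((1/2 : ℂ)*s2C*ξ⁻¹*(c τ)) * hs2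
    · rw [dA10 a b c d f k ha hb hc hd hf hk, dB10]
      simp only [laxA_apply, laxB_apply, Matrix.sub_apply, Matrix.mul_apply,
        Fin.sum_univ_three]
      simp only [Matrix.cons_val', Matrix.cons_val_zero, Matrix.cons_val_one, Matrix.head_cons,
        Matrix.empty_val', Matrix.cons_val_fin_one, Matrix.of_apply, Matrix.cons_val_two,
        Matrix.tail_cons, Matrix.vecHead, Matrix.vecTail, Matrix.cons_val_succ,
        Function.comp_apply, Fin.succ_zero_eq_one, Fin.succ_one_eq_two, Fin.isValue]
      linear_combination ((1 : ℂ)*s2C*ξ⁻¹) * ha' + ((1/6 : ℂ)*(τ:ℂ) + (-1/6 : ℂ)*(τ:ℂ)*ξ*ξ⁻¹ + (-1/4 : ℂ)*s2C*(c τ) + (1/6 : ℂ)*s2C^2*ξ⁻¹*(f τ) + (-1/2 : ℂ)*s2C^2*ξ⁻¹*(f τ)^2 + (-1/2 : ℂ)*s2C^2*ξ⁻¹*(b τ)*(f τ) + (1/12 : ℂ)*s2C^2*(τ:ℂ) + (1/9 : ℂ)*s2C^2*(τ:ℂ)^2*ξ⁻¹*(f τ) + (1/9 : ℂ)*s2C^2*(τ:ℂ)^2*ξ⁻¹*(b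 τ) + (-1/18 : ℂ)*s2C^3*(τ:ℂ)*ξ⁻¹*(c τ) + (1/6 : ℂ)*s2C^3*(τ:ℂ)*ξ⁻¹*(c τ)*(f τ) + (1/6 : ℂ)*s2C^3*(τ:ℂ)*ξ⁻¹*(b τ)*(c τ)) * hs2 + ((-1/3 : ℂ)*(τ:ℂ) + (1/2 : ℂ)*s2C*(c τ)) * hinv
    · rw [dA11 a b c d f k ha hb hc hd hf hk, dB11]
      simp only [laxA_apply, laxB_apply, Matrix.sub_apply, Matrix.mul_apply,
        Fin.sum_univ_three]
      simp only [Matrix.cons_val', Matrix.cons_val_zero, Matrix.cons_val_one, Matrix.head_cons,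
        Matrix.empty_val', Matrix.cons_val_fin_one, Matrix.of_apply, Matrix.cons_val_two,
        Matrix.tail_cons, Matrix.vecHead, Matrix.vecTail, Matrix.cons_val_succ,
        Function.comp_apply, Fin.succ_zero_eq_one, Fin.succ_one_eq_two, Fin.isValue]
      linear_combination ((-1/2 : ℂ)*s2C^2*ξ⁻¹) * hb' + ((-1/2 : ℂ)*s2C^2*ξ⁻¹) * hf' + ((1/9 : ℂ)*s2C^3*(τ:ℂ)^2*ξ⁻¹*(c τ)) * hs2
    · rw [dA12 a b c d f k ha hb hc hd hf hk, dB12]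
      simp only [laxA_apply, laxB_apply, Matrix.sub_apply, Matrix.mul_apply,
        Fin.sum_univ_three]
      simp only [Matrix.cons_val', Matrix.cons_val_zero, Matrix.cons_val_one, Matrix.head_cons,
        Matrix.empty_val', Matrix.cons_val_fin_one, Matrix.of_apply, Matrix.cons_val_two,
        Matrix.tail_cons, Matrix.vecHead, Matrix.vecTail, Matrix.cons_val_succ,
        Function.comp_apply, Fin.succ_zero_eq_one, Fin.succ_one_eq_two, Fin.isValue]
      linear_combination ((-1/2 : ℂ)*s2C*ξ⁻¹) * hc' + ((1/12 : ℂ)*s2C^2*ξ⁻¹ + (-1/4 : ℂ)*s2C^2*ξ⁻¹*(f τ) + (-1/4 : ℂ)*s2C^2*ξ⁻¹*(b τ)) * hs2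
    · rw [dA20 a b c d f k ha hb hc hd hf hk, dB20]
      simp only [laxA_apply, laxB_apply, Matrix.sub_apply, Matrix.mul_apply,
        Fin.sum_univ_three]
      simp only [Matrix.cons_val', Matrix.cons_val_zero, Matrix.cons_val_one, Matrix.head_cons,
        Matrix.empty_val', Matrix.cons_val_fin_one, Matrix.of_apply, Matrix.cons_val_two,
        Matrix.tail_cons, Matrix.vecHead, Matrix.vecTail, Matrix.cons_val_succ,
        Function.comp_apply, Fin.succ_zero_eq_one, Fin.succ_one_eq_two, Fin.isValue]
      linear_combination ((2 : ℂ)*ξ⁻¹) * hd' + ((-1/6 : ℂ) + (1/2 : ℂ)*(f τ) + (-1/2 : ℂ)*(b τ) + (1 : ℂ)*s2C*ξ⁻¹*(f τ)*(k τ) + (-1 : ℂ)*s2C*ξ⁻¹*(a τ)*(b τ) + (1/4 : ℂ)*s2C^2*(f τ) + (-1/4 : ℂ)*s2C^2*(b τ) + (-1/3 : ℂ)*s2C^2*(τ:ℂ)*ξ⁻¹*(c τ)*(k τ) + (-1/3 : ℂ)*s2C^2*(τ:ℂ)*ξ⁻¹*(a τ)*(c τ) + (-1/6 : ℂ)*s2C^3*(τ:ℂ)*(c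 τ)) * hs2 + ((-2/3 : ℂ) + (-1 : ℂ)*(f τ) + (1 : ℂ)*(b τ)) * hinv
    · rw [dA21 a b c d f k ha hb hc hd hf hk, dB21]
      simp only [laxA_apply, laxB_apply, Matrix.sub_apply, Matrix.mul_apply,
        Fin.sum_univ_three]
      simp only [Matrix.cons_val', Matrix.cons_val_zero, Matrix.cons_val_one, Matrix.head_cons,
        Matrix.empty_val', Matrix.cons_val_fin_one, Matrix.of_apply, Matrix.cons_val_two,
        Matrix.tail_cons, Matrix.vecHead, Matrix.vecTail, Matrix.cons_val_succ,
        Function.comp_apply, Fin.succ_zero_eq_one, Fin.succ_one_eq_two, Fin.isValue]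
      linear_combination ((1 : ℂ)*s2C*ξ⁻¹) * hk' + ((-1/6 : ℂ)*(τ:ℂ) + (1/6 : ℂ)*(τ:ℂ)*ξ*ξ⁻¹ + (-1/4 : ℂ)*s2C*(c τ) + (-1/6 : ℂ)*s2C^2*ξ⁻¹*(b τ) + (1/2 : ℂ)*s2C^2*ξ⁻¹*(b τ)*(f τ) + (1/2 : ℂ)*s2C^2*ξ⁻¹*(b τ)^2 + (-1/12 : ℂ)*s2C^2*(τ:ℂ) + (-1/9 : ℂ)*s2C^2*(τ:ℂ)^2*ξ⁻¹*(f τ) + (-1/9 : ℂ)*s2C^2*(τ:ℂ)^2*ξ⁻¹*(b τ) + (-1/18 : ℂ)*s2C^3*(τ:ℂ)*ξ⁻¹*(c τ) + (1/6 : ℂ)*s2C^3*(τ:ℂ)*ξ⁻¹*(c τ)*(f τ) + (1/6 : ℂ)*s2C^3*(τ:ℂ)*ξ⁻¹*(b τ)*(c τ)) * hs2 + ((1/3 : ℂ)*(τ:ℂ) + (1/2 : ℂ)*s2C*(c τ)) * hinv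
    · rw [dA22 a b c d f k ha hb hc hd hf hk, dB22]
      simp only [laxA_apply, laxB_apply, Matrix.sub_apply, Matrix.mul_apply,
        Fin.sum_univ_three]
      simp only [Matrix.cons_val', Matrix.cons_val_zero, Matrix.cons_val_one, Matrix.head_cons,
        Matrix.empty_val', Matrix.cons_val_fin_one, Matrix.of_apply, Matrix.cons_val_two,
        Matrix.tail_cons, Matrix.vecHead, Matrix.vecTail, Matrix.cons_val_succ,
        Function.comp_apply, Fin.succ_zero_eq_one, Fin.succ_one_eq_two, Fin.isValue]
      linear_combination ((1 : ℂ)*ξ⁻¹) * hf' + ((1/4 : ℂ) + (1/2 : ℂ)*s2C*ξ⁻¹*(k τ) + (1/2 : ℂ)*s2C*ξ⁻¹*(b τ)*(c τ) + (-1/9 : ℂ)*s2C*(τ:ℂ)^2*ξ⁻¹*(c τ) + (1/8 : ℂ)*s2C^2 + (1/6 : ℂ)*s2C^2*(τ:ℂ)*ξ⁻¹*(c τ)^2 + (-1/6 : ℂ)*s2C^2*(τ:ℂ)*ξ⁻¹*(b τ) + (-1/18 : ℂ)*s2C^3*(τ:ℂ)^2*ξ⁻¹*(c τ)) * hs2 +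 ((-1/2 : ℂ)) * hinv
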